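/- Let (X,d) be a metric space in which every open ball B(x,r) is relatively compact, and suppose there exists C ≥ 1 such that d_ε(x,y) ≤ C d(x,y) for all ε > 0 and all x,y ∈ X. Then for every x,y ∈ X the limit ρ(x,y) := lim_{ε↓0} d_ε(x,y) exists (the function ε ↦ d_ε(x,y) being non-increasing in ε), ρ is a metric on X satisfying d(x,y) ≤ ρ(x,y) ≤ C d(x,y) for all x,y ∈ X, and the metric space (X,ρ) is complete. -/

import Mathlib

open Metric ENNReal

/-- The `ε`-chain metric `d_ε` associated with a distance function `ρ`:
the infimum of total lengths of `ε`-chains from `x` to `y` (infimum of the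
empty set being `∞`). -/
noncomputable def chainDist {X : Type*} (ρ : X → X → ℝ) (ε : ℝ) (x y : X) : ℝ≥0∞ :=
  ⨅ c : {c : ℕ × (ℕ → X) // 0 < c.1 ∧ c.2 0 = x ∧ c.2 c.1 = y ∧
      ∀ i < c.1, ρ (c.2 i) (c.2 (i + 1)) < ε},
    ∑ i ∈ Finset.range c.val.1, ENNReal.ofReal (ρ (c.val.2 i) (c.val.2 (i + 1)))

/-- `ρ : X → X → ℝ` is a metric on `X`. -/
def IsMetricDist {X : Type*} (ρ : X → X → ℝ) : Prop :=
  (∀ x y, ρ x y = ρ y x) ∧ (∀ x y, ρ x y = 0 ↔ x = y) ∧ (∀ x y z, ρ x z ≤ ρ x y + ρ y z)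

section Aux
variable {X : Type*} [MetricSpace X]

lemma chainDist_anti {x y : X} {ε₁ ε₂ : ℝ} (h : ε₁ ≤ ε₂) :
    chainDist dist ε₂ x y ≤ chainDist dist ε₁ x y := by
  refine le_iInf fun c => ?_
  exact iInf_le_of_le ⟨c.1, c.2.1, c.2.2.1, c.2.2.2.1,
    fun i hi => (c.2.2.2.2 i hi).trans_le h⟩ le_rfl

lemma le_chainDist (ε : ℝ) (x y : X) :
    ENNReal.ofReal (dist x y) ≤ chainDist dist ε x y := by
  refine le_iInf fun c => ?_
  obtain ⟨⟨N, f⟩, hN, h0, hlast, -⟩ := c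
  dsimp only at *
  calc ENNReal.ofReal (dist x y) = ENNReal.ofReal (dist (f 0) (f N)) := by
        rw [show x = f 0 from h0.symm, show y = f N from hlast.symm]
    _ ≤ ENNReal.ofReal (∑ i ∈ Finset.range N, dist (f i) (f (i + 1))) :=
        ENNReal.ofReal_le_ofReal (dist_le_range_sum_dist f N)
    _ = ∑ i ∈ Finset.range N, ENNReal.ofReal (dist (f i) (f (i + 1))) :=
        ENNReal.ofReal_sum_of_nonneg fun i _ => dist_nonneg

lemma chainDist_symm_le (ε : ℝ) (x y : X) :
    chainDist dist ε x y ≤ chainDist dist ε y x := by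
  refine le_iInf fun c => ?_
  obtain ⟨⟨N, f⟩, hN, h0, hlast, hch⟩ := c
  dsimp only at *
  have key : ∀ i < N, f (N - i) = f ((N - 1 - i) + 1) ∧ f (N - (i + 1)) = f (N - 1 - i) := by
    intro i hi
    constructor
    · congr 1; omega
    · congr 1; omega
  refine iInf_le_of_le ⟨⟨N, fun i => f (N - i)⟩, hN, by simpa using hlast, by simpa using h0, ?_⟩
    (le_of_eq ?_)
  · intro i hi
    dsimp only at hi ⊢
    obtain ⟨h1, h2⟩ := key i hi
    rw [show N - (i+1) = N - 1 - i by omega] at *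
    rw [h1, h2, dist_comm]
    exact hch (N - 1 - i) (by omega)
  · simp only
    calc ∑ i ∈ Finset.range N, ENNReal.ofReal (dist (f (N - i)) (f (N - (i + 1))))
        = ∑ i ∈ Finset.range N, ENNReal.ofReal (dist (f ((N - 1 - i) + 1)) (f (N - 1 - i))) := by
          refine Finset.sum_congr rfl fun i hi => ?_
          rw [(key i (Finset.mem_range.1 hi)).1, (key i (Finset.mem_range.1 hi)).2]
      _ = ∑ i ∈ Finset.range N, ENNReal.ofReal (dist (f (i + 1)) (f i)) :=
          Finset.sum_range_reflect (fun j => ENNReal.ofReal (dist (f (j + 1)) (f j))) N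
      _ = ∑ i ∈ Finset.range N, ENNReal.ofReal (dist (f i) (f (i + 1))) := by
          simp_rw [dist_comm]

lemma chainDist_comm (ε : ℝ) (x y : X) : chainDist dist ε x y = chainDist dist ε y x :=
  le_antisymm (chainDist_symm_le ε x y) (chainDist_symm_le ε y x)

lemma chainDist_triangle (ε : ℝ) (x y z : X) :
    chainDist dist ε x z ≤ chainDist dist ε x y + chainDist dist ε y z := by
  conv_rhs => rw [chainDist, chainDist, ENNReal.iInf_add]
  refine le_iInf fun c₁ => ?_
  rw [ENNReal.add_iInf]
  refine le_iInf fun c₂ => ?_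
  obtain ⟨⟨N, f⟩, hN, hf0, hfN, hfch⟩ := c₁
  obtain ⟨⟨M, g⟩, hM, hg0, hgM, hgch⟩ := c₂
  dsimp only at *
  set h : ℕ → X := fun i => if i < N then f i else g (i - N) with hh
  have hfirst : ∀ i ≤ N, h i = f i := by
    intro i hi
    rcases lt_or_eq_of_le hi with hi | hi
    · simp [hh, hi]
    · have e1 : h i = g 0 := by subst hi; simp [hh]
      rw [e1, show g 0 = y from hg0, hi]
      exact (show f N = y from hfN).symm
  have hsecond : ∀ i, h (N + i) = g i := by
    intro i; simp [hh, Nat.add_sub_cancel_left]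
  refine iInf_le_of_le ⟨⟨N + M, h⟩, by omega, by dsimp only; rw [hfirst 0 (by omega)]; exact hf0,
    by dsimp only; rw [hsecond M]; exact hgM, ?_⟩ (le_of_eq ?_)
  · intro i hi
    dsimp only at hi ⊢
    rcases lt_or_ge i N with hiN | hiN
    · rw [hfirst i hiN.le, hfirst (i + 1) hiN]
      exact hfch i hiN
    · obtain ⟨j, rfl⟩ := Nat.exists_eq_add_of_le hiN
      rw [hsecond j, show N + j + 1 = N + (j + 1) by omega, hsecond (j + 1)]
      exact hgch j (by omega)
  · simp only
    rw [Finset.sum_range_add]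
    congr 1
    · refine Finset.sum_congr rfl fun i hi => ?_
      have hi := Finset.mem_range.1 hi
      rw [hfirst i hi.le, hfirst (i + 1) hi]
    · refine Finset.sum_congr rfl fun i hi => ?_
      rw [hsecond i, show N + i + 1 = N + (i + 1) by omega, hsecond (i + 1)]

end Aux

/-- under the chain condition (with all balls relatively compact),
`ε ↦ d_ε(x,y)` is non-increasing, the limit `ρ(x,y) = lim_{ε↓0} d_ε(x,y)` exists,
`ρ` is a metric with `d ≤ ρ ≤ C d`, and `(X,ρ)` is complete (every `ρ`-Cauchy
sequence `ρ`-converges). -/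
theorem chainDist_limit_metric_complete {X : Type*} [MetricSpace X]
    (hrel : ∀ (x : X) (r : ℝ), IsCompact (closure (Metric.ball x r)))
    (C : ℝ) (hC : 1 ≤ C)
    (hchain : ∀ ε : ℝ, 0 < ε → ∀ x y : X,
      chainDist dist ε x y ≤ ENNReal.ofReal (C * dist x y)) :
    (∀ (x y : X) (ε₁ ε₂ : ℝ), 0 < ε₁ → ε₁ ≤ ε₂ →
      chainDist dist ε₂ x y ≤ chainDist dist ε₁ x y) ∧
    ∃ ρ : X → X → ℝ,
      (∀ x y : X, Filter.Tendsto (fun ε : ℝ => (chainDist dist ε x y).toReal)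
        (nhdsWithin 0 (Set.Ioi 0)) (nhds (ρ x y))) ∧
      IsMetricDist ρ ∧
      (∀ x y : X, dist x y ≤ ρ x y ∧ ρ x y ≤ C * dist x y) ∧
      (∀ u : ℕ → X, (∀ δ : ℝ, 0 < δ → ∃ K : ℕ, ∀ i ≥ K, ∀ j ≥ K, ρ (u i) (u j) < δ) →
        ∃ x : X, Filter.Tendsto (fun i => ρ (u i) x) Filter.atTop (nhds 0)) := by
  refine ⟨fun x y ε₁ ε₂ _ h => chainDist_anti h, ?_⟩
  -- the supremum over ε > 0
  set S : X → X → ℝ≥0∞ := fun x y => ⨆ ε : {ε : ℝ // 0 < ε}, chainDist dist ε.1 x y with hS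
  have hSle : ∀ x y, S x y ≤ ENNReal.ofReal (C * dist x y) :=
    fun x y => iSup_le fun ε => hchain ε.1 ε.2 x y
  have hSne : ∀ x y, S x y ≠ ∞ := fun x y => ((hSle x y).trans_lt ofReal_lt_top).ne
  have hSge : ∀ x y, ENNReal.ofReal (dist x y) ≤ S x y :=
    fun x y => le_iSup_of_le ⟨1, one_pos⟩ (le_chainDist 1 x y)
  have hFleS : ∀ (x y : X) (ε : ℝ), 0 < ε → chainDist dist ε x y ≤ S x y :=
    fun x y ε hε => le_iSup (fun δ : {ε : ℝ // 0 < ε} => chainDist dist δ.1 x y) ⟨ε, hε⟩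
  set ρ : X → X → ℝ := fun x y => (S x y).toReal with hρ
  have hdle : ∀ x y : X, dist x y ≤ ρ x y := by
    intro x y
    have := ENNReal.toReal_mono (hSne x y) (hSge x y)
    rwa [ENNReal.toReal_ofReal dist_nonneg] at this
  have hleC : ∀ x y : X, ρ x y ≤ C * dist x y := fun x y =>
    ENNReal.toReal_le_of_le_ofReal (mul_nonneg (zero_le_one.trans hC) dist_nonneg) (hSle x y)
  refine ⟨ρ, ?_, ⟨?_, ?_, ?_⟩, fun x y => ⟨hdle x y, hleC x y⟩, ?_⟩
  · -- tendsto
    intro x y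
    have hT : Filter.Tendsto (fun ε : ℝ => chainDist dist ε x y)
        (nhdsWithin 0 (Set.Ioi 0)) (nhds (S x y)) := by
      rw [tendsto_order]
      constructor
      · intro b hb
        obtain ⟨ε₀, hε₀⟩ := lt_iSup_iff.1 hb
        filter_upwards [Ioo_mem_nhdsGT_of_mem (Set.mem_Ico.2 ⟨le_refl 0, ε₀.2⟩)] with ε hε
        exact hε₀.trans_le (chainDist_anti hε.2.le)
      · intro b hb
        filter_upwards [self_mem_nhdsWithin] with ε hε
        exact ((hFleS x y ε hε).trans_lt hb)
    exact (ENNReal.tendsto_toReal (hSne x y)).comp hT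
  · -- symm
    intro x y
    simp only [hρ, hS]
    congr 1
    exact iSup_congr fun ε => chainDist_comm ε.1 x y
  · -- eq zero iff
    intro x y
    constructor
    · intro h
      have := hdle x y
      rw [h] at this
      exact dist_le_zero.1 this
    · rintro rfl
      have : S x x ≤ 0 := by simpa using hSle x x
      simp [hρ, le_antisymm this zero_le]
  · -- triangle
    intro x y z
    have h1 : S x z ≤ S x y + S y z := by
      refine iSup_le fun ε => (chainDist_triangle ε.1 x y z).trans ?_
      exact add_le_add (hFleS x y ε.1 ε.2) (hFleS y z ε.1 ε.2)
    calc ρ x z ≤ (S x y + S y z).toReal :=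
          ENNReal.toReal_mono (ENNReal.add_ne_top.2 ⟨hSne x y, hSne y z⟩) h1
      _ = ρ x y + ρ y z := ENNReal.toReal_add (hSne x y) (hSne y z)
  · -- completeness
    have : ProperSpace X := by
      refine .of_isCompact_closedBall_of_le 0 fun x r hr => ?_
      exact (hrel x (r + 1)).of_isClosed_subset Metric.isClosed_closedBall
        ((closedBall_subset_ball (by linarith)).trans subset_closure)
    intro u hu
    have hcauchy : CauchySeq u := by
      rw [Metric.cauchySeq_iff]
      intro δ hδ
      obtain ⟨K, hK⟩ := hu δ hδ
      exact ⟨K, fun i hi j hj => ((hdle (u i) (u j)).trans_lt (hK i hi j hj))⟩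
    obtain ⟨x, hx⟩ := cauchySeq_tendsto_of_complete hcauchy
    refine ⟨x, ?_⟩
    have hd0 : Filter.Tendsto (fun i => dist (u i) x) Filter.atTop (nhds 0) :=
      tendsto_iff_dist_tendsto_zero.1 hx
    have hCd : Filter.Tendsto (fun i => C * dist (u i) x) Filter.atTop (nhds 0) := by
      simpa using hd0.const_mul C
    exact squeeze_zero (fun i => dist_nonneg.trans (hdle (u i) x)) (fun i => hleC (u i) x) hCd
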